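/- Let 𝒜 be a pre-2-filtered 2-category and F a pseudofunctor from 𝒜 to Cat. Given 2-cells γ₁ : f ≫ u₁ ⟹ g ≫ v₁ and γ₂ : f ≫ u₂ ⟹ g ≫ v₂ (with f : E ⟶ A, g : E ⟶ B, uᵢ : A ⟶ Cᵢ, vᵢ : B ⟶ Cᵢ) and an object x of F(E), the premorphisms (u₁, F(γ₁)ₓ, v₁) and (u₂, F(γ₂)ₓ, v₂) from (A, F(f)(x)) to (B, F(g)(x)) are equivalent, where F(γᵢ)ₓ denotes the component at x of F applied to γᵢ, regarded (via the compositor isomorphisms of F) as a morphism F(uᵢ)(F(f)(x)) ⟶ F(vᵢ)(F(g)(x)) in F(Cᵢ). -/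

import Mathlib

open CategoryTheory Bicategory CategoryTheory.Limits

universe w₂ v₂ u₂ w v u p p' t s t' s' t₁ s₁ t₂ s₂

namespace DubucStreet

variable {𝒜 : Type u} [Bicategory.{w, v} 𝒜]

/-- The LL equation for a pair of 2-cells `(α, β)` relative to `(γ₁, γ₂)`. -/
def LLeq {E A B C₁ C₂ C : 𝒜} (f : E ⟶ A) (g : E ⟶ B)
    {u₁ : A ⟶ C₁} {v₁ : B ⟶ C₁} {u₂ : A ⟶ C₂} {v₂ : B ⟶ C₂}
    (γ₁ : f ≫ u₁ ⟶ g ≫ v₁) (γ₂ : f ≫ u₂ ⟶ g ≫ v₂)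
    (w₁ : C₁ ⟶ C) (w₂ : C₂ ⟶ C)
    (α : v₁ ≫ w₁ ⟶ v₂ ≫ w₂) (β : u₁ ≫ w₁ ⟶ u₂ ≫ w₂) : Prop :=
  (α_ f u₁ w₁).inv ≫ (γ₁ ▷ w₁) ≫ (α_ g v₁ w₁).hom ≫ (g ◁ α) =
    (f ◁ β) ≫ (α_ f u₂ w₂).inv ≫ (γ₂ ▷ w₂) ≫ (α_ g v₂ w₂).hom

/-- Axiom F1 : every cospan of 1-cells can be completed to a square with an
invertible 2-cell. -/
def AxiomF1 (𝒜 : Type u) [Bicategory.{w, v} 𝒜] : Prop :=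
  ∀ {E A B : 𝒜} (f : E ⟶ A) (g : E ⟶ B),
    ∃ (C : 𝒜) (u : A ⟶ C) (v : B ⟶ C), Nonempty (f ≫ u ≅ g ≫ v)

/-- Axiom F2 : any two 2-cells as below can be equalized by a pair of invertible
2-cells satisfying the LL equation. -/
def AxiomF2 (𝒜 : Type u) [Bicategory.{w, v} 𝒜] : Prop :=
  ∀ {E A B C₁ C₂ : 𝒜} {f : E ⟶ A} {g : E ⟶ B}
    {u₁ : A ⟶ C₁} {v₁ : B ⟶ C₁} {u₂ : A ⟶ C₂} {v₂ : B ⟶ C₂}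
    (γ₁ : f ≫ u₁ ⟶ g ≫ v₁) (γ₂ : f ≫ u₂ ⟶ g ≫ v₂),
    ∃ (C : 𝒜) (w₁ : C₁ ⟶ C) (w₂ : C₂ ⟶ C)
      (α : v₁ ≫ w₁ ≅ v₂ ≫ w₂) (β : u₁ ≫ w₁ ≅ u₂ ≫ w₂),
      LLeq f g γ₁ γ₂ w₁ w₂ α.hom β.hom

/-- A premorphism `(A, x) → (B, y)` : a cospan `u : A ⟶ C`, `v : B ⟶ C` together with a
morphism `ξ : F(u)(x) ⟶ F(v)(y)` in `F(C)`. -/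
structure Premor (F : Pseudofunctor 𝒜 Cat.{v₂, u₂}) (A B : 𝒜) (x : F.obj A) (y : F.obj B) where
  cod : 𝒜
  u : A ⟶ cod
  v : B ⟶ cod
  ξ : (F.map u).toFunctor.obj x ⟶ (F.map v).toFunctor.obj y

/-- The LL equation for homotopy data `(w₁, w₂, α, β)` between two premorphisms :
`F(w₁)(ξ₁) ≫ F(α)_y = F(β)_x ≫ F(w₂)(ξ₂)`, all identifications being made via the
compositor isomorphisms of `F`. -/
def HomotopyLL (F : Pseudofunctor 𝒜 Cat.{v₂, u₂}) {A B : 𝒜} {x : F.obj A} {y : F.obj B}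
    (p q : Premor F A B x y) {V : 𝒜} (w₁ : p.cod ⟶ V) (w₂ : q.cod ⟶ V)
    (α : p.v ≫ w₁ ⟶ q.v ≫ w₂) (β : p.u ≫ w₁ ⟶ q.u ≫ w₂) : Prop :=
  (F.map w₁).toFunctor.map p.ξ ≫ (F.mapComp p.v w₁).inv.toNatTrans.app y ≫ (F.map₂ α).toNatTrans.app y ≫
      (F.mapComp q.v w₂).hom.toNatTrans.app y =
    (F.mapComp p.u w₁).inv.toNatTrans.app x ≫ (F.map₂ β).toNatTrans.app x ≫ (F.mapComp q.u w₂).hom.toNatTrans.app x ≫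
      (F.map w₂).toFunctor.map q.ξ

/-- A homotopy `(w₁, w₂, α, β)` between two premorphisms. -/
structure Homotopy (F : Pseudofunctor 𝒜 Cat.{v₂, u₂}) {A B : 𝒜} {x : F.obj A} {y : F.obj B}
    (p q : Premor F A B x y) where
  vertex : 𝒜
  w₁ : p.cod ⟶ vertex
  w₂ : q.cod ⟶ vertex
  α : p.v ≫ w₁ ≅ q.v ≫ w₂
  β : p.u ≫ w₁ ≅ q.u ≫ w₂
  ll : HomotopyLL F p q w₁ w₂ α.hom β.hom

/-- Two premorphisms are equivalent when there is a homotopy from one to the other. -/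
def PreEquiv (F : Pseudofunctor 𝒜 Cat.{v₂, u₂}) {A B : 𝒜} {x : F.obj A} {y : F.obj B}
    (p q : Premor F A B x y) : Prop :=
  Nonempty (Homotopy F p q)

lemma cat_assoc_hom_app {B C D E : Cat} (F : B ⟶ C) (G : C ⟶ D) (H : D ⟶ E) (X : B) :
    (α_ F G H).hom.toNatTrans.app X = 𝟙 _ := rfl

lemma mapComp_comp_hom_app (F : Pseudofunctor 𝒜 Cat.{v₂, u₂}) [Bicategory.Strict 𝒜]
    {a b c d : 𝒜} (p : a ⟶ b) (q : b ⟶ c) (r : c ⟶ d) (x : F.obj a) :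
    (F.mapComp (p ≫ q) r).hom.toNatTrans.app x =
      eqToHom (by rw [Bicategory.Strict.assoc]) ≫ (F.mapComp p (q ≫ r)).hom.toNatTrans.app x ≫
        (F.mapComp q r).hom.toNatTrans.app ((F.map p).toFunctor.obj x) ≫ (F.map r).toFunctor.map ((F.mapComp p q).inv.toNatTrans.app x) := by
  have h := congrArg (fun η => η.toNatTrans.app x) (F.map₂_associator p q r)
  simp only [Bicategory.Strict.associator_eqToIso (B := 𝒜), eqToIso.hom,
    PrelaxFunctor.map₂_eqToHom, Cat.Hom₂.comp_app, Cat.whiskerLeft_app, Cat.whiskerRight_app,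
    cat_assoc_hom_app, Cat.eqToHom_app, Category.id_comp, Category.comp_id,
    Category.assoc] at h
  rw [h]
  simp only [Category.assoc, Cat.Hom.inv_hom_id_toNatTrans_app_assoc, Cat.Hom.inv_hom_id_toNatTrans_app,
    Category.comp_id, ← Functor.map_comp, Cat.Hom.hom_inv_id_toNatTrans_app, Functor.map_id]
  simp

lemma mapComp_comp_inv_app (F : Pseudofunctor 𝒜 Cat.{v₂, u₂}) [Bicategory.Strict 𝒜]
    {a b c d : 𝒜} (p : a ⟶ b) (q : b ⟶ c) (r : c ⟶ d) (x : F.obj a) :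
    (F.mapComp (p ≫ q) r).inv.toNatTrans.app x =
      (F.map r).toFunctor.map ((F.mapComp p q).hom.toNatTrans.app x) ≫ (F.mapComp q r).inv.toNatTrans.app ((F.map p).toFunctor.obj x) ≫
        (F.mapComp p (q ≫ r)).inv.toNatTrans.app x ≫ eqToHom (by rw [Bicategory.Strict.assoc]) := by
  rw [← cancel_epi ((F.mapComp (p ≫ q) r).hom.toNatTrans.app x), Cat.Hom.hom_inv_id_toNatTrans_app,
    mapComp_comp_hom_app]
  simp only [Category.assoc, ← Functor.map_comp_assoc, Cat.Hom.inv_hom_id_toNatTrans_app, Functor.map_id,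
    Category.id_comp, Cat.Hom.hom_inv_id_toNatTrans_app_assoc, eqToHom_trans, eqToHom_refl]
  simp

/-- Given 2-cells `γ₁ : f ≫ u₁ ⟹ g ≫ v₁` and `γ₂ : f ≫ u₂ ⟹ g ≫ v₂` and an object
`x` of `F(E)`, the premorphisms `(u₁, F(γ₁)ₓ, v₁)` and `(u₂, F(γ₂)ₓ, v₂)` from
`(A, F(f)(x))` to `(B, F(g)(x))` are equivalent. -/
theorem premorphisms_from_2cells_equivalent [Bicategory.Strict 𝒜]
    (h1 : AxiomF1 𝒜) (h2 : AxiomF2 𝒜)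
    (F : Pseudofunctor 𝒜 Cat.{v₂, u₂}) {E A B C₁ C₂ : 𝒜} (f : E ⟶ A) (g : E ⟶ B)
    (u₁ : A ⟶ C₁) (v₁ : B ⟶ C₁) (u₂ : A ⟶ C₂) (v₂ : B ⟶ C₂)
    (γ₁ : f ≫ u₁ ⟶ g ≫ v₁) (γ₂ : f ≫ u₂ ⟶ g ≫ v₂) (x : F.obj E) :
    PreEquiv F
      (⟨C₁, u₁, v₁,
        (F.mapComp f u₁).inv.toNatTrans.app x ≫ (F.map₂ γ₁).toNatTrans.app x ≫ (F.mapComp g v₁).hom.toNatTrans.app x⟩ :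
        Premor F A B ((F.map f).toFunctor.obj x) ((F.map g).toFunctor.obj x))
      (⟨C₂, u₂, v₂,
        (F.mapComp f u₂).inv.toNatTrans.app x ≫ (F.map₂ γ₂).toNatTrans.app x ≫ (F.mapComp g v₂).hom.toNatTrans.app x⟩ :
        Premor F A B ((F.map f).toFunctor.obj x) ((F.map g).toFunctor.obj x)) := by
  obtain ⟨C, w₁, w₂, α, β, hll⟩ := h2 γ₁ γ₂
  refine ⟨⟨C, w₁, w₂, α, β, ?_⟩⟩
  have h := congrArg (fun η => (F.map₂ η).toNatTrans.app x) hll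
  simp only [LLeq, Bicategory.Strict.associator_eqToIso, eqToIso.inv, eqToIso.hom,
    PrelaxFunctor.map₂_comp, PrelaxFunctor.map₂_eqToHom, Pseudofunctor.map₂_whisker_left,
    Pseudofunctor.map₂_whisker_right, Cat.Hom₂.comp_app, Cat.whiskerLeft_app,
    Cat.whiskerRight_app, Cat.eqToHom_app, Category.assoc, Cat.Hom.inv_hom_id_toNatTrans_app_assoc,
    Cat.Hom.hom_inv_id_toNatTrans_app_assoc] at h
  simp only [HomotopyLL, Functor.map_comp, Category.assoc]
  simp only [mapComp_comp_hom_app, mapComp_comp_inv_app, Category.assoc, eqToHom_trans,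
    eqToHom_refl, eqToHom_trans_assoc, Category.id_comp, Category.comp_id,
    Cat.Hom.inv_hom_id_toNatTrans_app_assoc, Cat.Hom.hom_inv_id_toNatTrans_app_assoc, Cat.Hom.inv_hom_id_toNatTrans_app,
    Cat.Hom.hom_inv_id_toNatTrans_app] at h
  rw [← cancel_mono ((F.mapComp v₂ w₂).inv.toNatTrans.app ((F.map g).toFunctor.obj x))]
  rw [← cancel_mono ((F.mapComp g (v₂ ≫ w₂)).inv.toNatTrans.app x)]
  rw [← cancel_epi ((F.mapComp u₁ w₁).hom.toNatTrans.app ((F.map f).toFunctor.obj x))]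
  rw [← cancel_epi ((F.mapComp f (u₁ ≫ w₁)).hom.toNatTrans.app x)]
  simpa using h

end DubucStreet
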